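/- arXiv:2402.05108 — 2 statements merged into one kernel-verified Lean document; each statement's English description precedes it below -/
import Mathlib

section
/- Let k be a real number with k > 1, and let a, b be nonzero complex numbers with |a| = |b|. Suppose d ∈ ℝ is such that (b − a)·exp(i k d) is a negative real number (i.e. d is a singular direction with a Stokes arrow from the exponent a z^k to the exponent b z^k). Then Re(a·exp(i k d)) > 0 and Re(b·exp(i k d)) < 0, and, letting I be the connected component of d in {θ ∈ ℝ | Re(a·exp(i k θ)) > 0} and J the connected component of d in {θ ∈ ℝ | Re(b·exp(i k θ)) < 0}, the direction d is the midpoint of the bounded open interval I ∩ J, i.e. d = (sInf(I ∩ J) + sSup(I ∩ J))/2. -/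
open Complex Set

/-- The set of directions `θ` in which the exponential `exp(a z^k)` grows along the ray
`z = r e^{iθ}`, i.e. where `Re(a · exp(i k θ)) > 0`. -/
def posDirections (a : ℂ) (k : ℝ) : Set ℝ :=
  {θ : ℝ | 0 < (a * Complex.exp (Complex.I * k * θ)).re}

/-- The set of directions `θ` in which the exponential `exp(a z^k)` decays along the ray
`z = r e^{iθ}`, i.e. where `Re(a · exp(i k θ)) < 0`. -/
def negDirections (a : ℂ) (k : ℝ) : Set ℝ :=
  {θ : ℝ | (a * Complex.exp (Complex.I * k * θ)).re < 0}

/-- The connected component of `d` in `{θ | 0 < g θ}` is `Ioo e₁ e₂` when `g` is positive on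
`Ioo e₁ e₂` and vanishes at the endpoints. -/
lemma comp_eq_Ioo (g : ℝ → ℝ) (e₁ e₂ d : ℝ) (h1 : e₁ < d) (h2 : d < e₂)
    (hpos : ∀ θ ∈ Ioo e₁ e₂, 0 < g θ) (hz1 : g e₁ = 0) (hz2 : g e₂ = 0) :
    connectedComponentIn {θ | 0 < g θ} d = Ioo e₁ e₂ := by
  apply Subset.antisymm
  · intro θ hθ
    have hsub : connectedComponentIn {θ | 0 < g θ} d ⊆ {θ | 0 < g θ} :=
      connectedComponentIn_subset _ _
    have hoc : (connectedComponentIn {θ | 0 < g θ} d).OrdConnected :=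
      (isPreconnected_connectedComponentIn).ordConnected
    have hdmem : d ∈ connectedComponentIn {θ | 0 < g θ} d :=
      mem_connectedComponentIn (hpos d ⟨h1, h2⟩)
    constructor
    · by_contra h
      push_neg at h
      have h3 : e₁ ∈ connectedComponentIn {θ | 0 < g θ} d :=
        hoc.out hθ hdmem ⟨h, h1.le⟩
      have := hsub h3
      simp only [mem_setOf_eq, hz1] at this
      exact lt_irrefl 0 this
    · by_contra h
      push_neg at h
      have h3 : e₂ ∈ connectedComponentIn {θ | 0 < g θ} d :=
        hoc.out hdmem hθ ⟨h2.le, h⟩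
      have := hsub h3
      simp only [mem_setOf_eq, hz2] at this
      exact lt_irrefl 0 this
  · exact isPreconnected_Ioo.subset_connectedComponentIn ⟨h1, h2⟩ (fun θ hθ => hpos θ hθ)

lemma re_mul_exp (A : ℂ) (t : ℝ) :
    (A * Complex.exp ((t : ℂ) * Complex.I)).re
      = ‖A‖ * Real.cos (Complex.arg A + t) := by
  conv_lhs => rw [← Complex.norm_mul_exp_arg_mul_I A]
  rw [mul_assoc, ← Complex.exp_add]
  have : (Complex.arg A : ℂ) * Complex.I + (t : ℂ) * Complex.I
      = ((Complex.arg A + t : ℝ) : ℂ) * Complex.I := by push_cast; ring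
  rw [this, Complex.re_ofReal_mul, Complex.exp_ofReal_mul_I_re]

lemma re_neg_conj_mul_exp (A : ℂ) (t : ℝ) :
    (-(starRingEnd ℂ) A * Complex.exp (((t : ℝ) : ℂ) * Complex.I)).re
      = -(‖A‖ * Real.cos (Complex.arg A + (-t))) := by
  have h2 : (starRingEnd ℂ) A * Complex.exp (((t:ℝ) : ℂ) * Complex.I)
      = (starRingEnd ℂ) (A * Complex.exp (((-t : ℝ) : ℂ) * Complex.I)) := by
    rw [map_mul, ← Complex.exp_conj]
    congr 2
    simp [Complex.conj_I]
  rw [neg_mul, Complex.neg_re, h2, Complex.conj_re, re_mul_exp]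

/-- if `d` is a singular direction with a Stokes arrow from the exponent `a z^k`
to the exponent `b z^k` (with `|a| = |b|`, `k > 1`), i.e. `(b - a)·exp(i k d)` is a negative real
number, then `Re(a·exp(i k d)) > 0`, `Re(b·exp(i k d)) < 0`, and `d` is the midpoint of the
intersection `I ∩ J` of the connected component `I` of `d` in the positive directions of `a z^k`
with the connected component `J` of `d` in the negative directions of `b z^k`. -/
theorem singular_direction_is_midpoint
    (k : ℝ) (hk : 1 < k) (a b : ℂ) (ha : a ≠ 0) (hb : b ≠ 0)
    (hab : ‖a‖ = ‖b‖) (d : ℝ)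
    (hd : ∃ r : ℝ, r < 0 ∧ (b - a) * Complex.exp (Complex.I * k * d) = r) :
    0 < (a * Complex.exp (Complex.I * k * d)).re ∧
    (b * Complex.exp (Complex.I * k * d)).re < 0 ∧
    d = (sInf (connectedComponentIn (posDirections a k) d ∩
              connectedComponentIn (negDirections b k) d) +
         sSup (connectedComponentIn (posDirections a k) d ∩
              connectedComponentIn (negDirections b k) d)) / 2 := by
  obtain ⟨r, hr, hreq⟩ := hd
  have hk0 : (0:ℝ) < k := by linarith
  set E : ℂ := Complex.exp (Complex.I * k * d) with hE
  set A : ℂ := a * E with hA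
  set B : ℂ := b * E with hB
  have hBA : B - A = (r : ℂ) := by rw [hA, hB, ← sub_mul]; exact hreq
  have hEabs : ‖E‖ = 1 := by
    rw [hE, Complex.norm_exp]
    have : (Complex.I * k * d).re = 0 := by simp
    rw [this, Real.exp_zero]
  have hAabs : ‖A‖ = ‖a‖ := by rw [hA, norm_mul, hEabs, mul_one]
  have hBabs : ‖B‖ = ‖A‖ := by
    rw [hB, norm_mul, hEabs, mul_one, hAabs, hab]
  have hBeq : B = A + (r : ℂ) := by rw [← hBA]; ring
  have hnsq : Complex.normSq B = Complex.normSq A := by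
    rw [← Complex.sq_norm, ← Complex.sq_norm, hBabs]
  have hBre : B.re = A.re + r := by rw [hBeq]; simp
  have hBim : B.im = A.im := by rw [hBeq]; simp
  have hAre : A.re = -r / 2 := by
    have h1 : B.re * B.re + B.im * B.im = A.re * A.re + A.im * A.im := by
      simpa only [Complex.normSq_apply] using hnsq
    rw [hBre, hBim] at h1
    have h2 : r * (2 * A.re + r) = 0 := by nlinarith
    rcases mul_eq_zero.mp h2 with h | h
    · exact absurd h (ne_of_lt hr)
    · linarith
  have hArepos : 0 < A.re := by rw [hAre]; linarith
  have hBconj : B = -(starRingEnd ℂ) A := by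
    apply Complex.ext
    · simp only [hBre, hAre, Complex.neg_re, Complex.conj_re]; ring
    · simp [hBim]
  set α : ℝ := Complex.arg A with hα
  set R : ℝ := ‖A‖ with hR
  have hAne : A ≠ 0 := fun h => by rw [h, Complex.zero_re] at hArepos; exact lt_irrefl 0 hArepos
  have hRpos : 0 < R := norm_pos_iff.mpr hAne
  have hαlt : |α| < Real.pi / 2 :=
    Complex.abs_arg_lt_pi_div_two_iff.mpr (Or.inl hArepos)
  have hα1 : -(Real.pi/2) < α := (abs_lt.mp hαlt).1
  have hα2 : α < Real.pi/2 := (abs_lt.mp hαlt).2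
  have hcosα : 0 < Real.cos α := Real.cos_pos_of_mem_Ioo ⟨by linarith, hα2⟩
  -- key formulas
  have key_a : ∀ θ : ℝ, (a * Complex.exp (Complex.I * k * θ)).re
      = R * Real.cos (α + k * (θ - d)) := by
    intro θ
    have h1 : a * Complex.exp (Complex.I * k * θ)
        = A * Complex.exp (((k * (θ - d) : ℝ) : ℂ) * Complex.I) := by
      rw [hA, hE]
      conv_rhs => rw [mul_assoc, ← Complex.exp_add]
      congr 1
      push_cast; ring
    rw [h1, re_mul_exp]
  have key_b : ∀ θ : ℝ, (b * Complex.exp (Complex.I * k * θ)).re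
      = -(R * Real.cos (α + (-(k * (θ - d))))) := by
    intro θ
    have h1 : b * Complex.exp (Complex.I * k * θ)
        = B * Complex.exp (((k * (θ - d) : ℝ) : ℂ) * Complex.I) := by
      rw [hB, hE]
      conv_rhs => rw [mul_assoc, ← Complex.exp_add]
      congr 1
      push_cast; ring
    rw [h1, hBconj, re_neg_conj_mul_exp]
  refine ⟨?_, ?_, ?_⟩
  · rw [key_a d]
    simp only [sub_self, mul_zero, add_zero]
    exact mul_pos hRpos hcosα
  · rw [key_b d]
    simp only [sub_self, mul_zero, neg_zero, add_zero, neg_neg, neg_lt, neg_zero]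
    exact mul_pos hRpos hcosα
  · set e₁a : ℝ := d + (-(Real.pi/2) - α)/k with he₁a
    set e₂a : ℝ := d + (Real.pi/2 - α)/k with he₂a
    set e₁b : ℝ := d + (α - Real.pi/2)/k with he₁b
    set e₂b : ℝ := d + (α + Real.pi/2)/k with he₂b
    have hdivlt : ∀ x y : ℝ, x < y → d + x/k < d + y/k := by
      intro x y h
      have : x/k < y/k := by gcongr
      linarith
    have hdivle : ∀ x y : ℝ, x ≤ y → d + x/k ≤ d + y/k := by
      intro x y h
      have : x/k ≤ y/k := by gcongr
      linarith
    have hltd : ∀ x : ℝ, x < 0 → d + x/k < d := by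
      intro x h
      have : x/k < 0 := div_neg_of_neg_of_pos h hk0
      linarith
    have hdlt : ∀ y : ℝ, 0 < y → d < d + y/k := by
      intro y h
      have : 0 < y/k := div_pos h hk0
      linarith
    have hIa : connectedComponentIn (posDirections a k) d = Ioo e₁a e₂a := by
      have hset : posDirections a k = {θ | 0 < R * Real.cos (α + k * (θ - d))} := by
        ext θ; simp only [posDirections, mem_setOf_eq, key_a θ]
      rw [hset]
      apply comp_eq_Ioo
      · rw [he₁a]; exact hltd _ (by linarith)
      · rw [he₂a]; exact hdlt _ (by linarith)
      · intro θ hθ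
        apply mul_pos hRpos
        apply Real.cos_pos_of_mem_Ioo
        have hl := hθ.1
        have hu := hθ.2
        rw [he₁a] at hl
        rw [he₂a] at hu
        have h3 : (-(Real.pi/2) - α)/k < θ - d := by linarith
        have h4 : θ - d < (Real.pi/2 - α)/k := by linarith
        have h5 : -(Real.pi/2) - α < k * (θ - d) := by
          have := (div_lt_iff₀ hk0).mp h3; linarith
        have h6 : k * (θ - d) < Real.pi/2 - α := by
          have := (lt_div_iff₀ hk0).mp h4; linarith
        constructor <;> [linarith; linarith]
      · rw [he₁a]
        have h5 : α + k * (d + (-(Real.pi/2) - α)/k - d) = -(Real.pi/2) := by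
          have hx : k ≠ 0 := ne_of_gt hk0
          field_simp
          ring
        rw [h5, Real.cos_neg, Real.cos_pi_div_two, mul_zero]
      · rw [he₂a]
        have h5 : α + k * (d + (Real.pi/2 - α)/k - d) = Real.pi/2 := by
          have hx : k ≠ 0 := ne_of_gt hk0
          field_simp
          ring
        rw [h5, Real.cos_pi_div_two, mul_zero]
    have hIb : connectedComponentIn (negDirections b k) d = Ioo e₁b e₂b := by
      have hset : negDirections b k = {θ | 0 < R * Real.cos (α + (-(k * (θ - d))))} := by
        ext θ; simp only [negDirections, mem_setOf_eq, key_b θ, neg_lt, neg_zero]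
      rw [hset]
      apply comp_eq_Ioo
      · rw [he₁b]; exact hltd _ (by linarith)
      · rw [he₂b]; exact hdlt _ (by linarith)
      · intro θ hθ
        apply mul_pos hRpos
        apply Real.cos_pos_of_mem_Ioo
        have hl := hθ.1
        have hu := hθ.2
        rw [he₁b] at hl
        rw [he₂b] at hu
        have h3 : (α - Real.pi/2)/k < θ - d := by linarith
        have h4 : θ - d < (α + Real.pi/2)/k := by linarith
        have h5 : α - Real.pi/2 < k * (θ - d) := by
          have := (div_lt_iff₀ hk0).mp h3; linarith
        have h6 : k * (θ - d) < α + Real.pi/2 := by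
          have := (lt_div_iff₀ hk0).mp h4; linarith
        constructor <;> [linarith; linarith]
      · rw [he₁b]
        have h5 : α + (-(k * (d + (α - Real.pi/2)/k - d))) = Real.pi/2 := by
          have hx : k ≠ 0 := ne_of_gt hk0
          field_simp
          ring
        rw [h5, Real.cos_pi_div_two, mul_zero]
      · rw [he₂b]
        have h5 : α + (-(k * (d + (α + Real.pi/2)/k - d))) = -(Real.pi/2) := by
          have hx : k ≠ 0 := ne_of_gt hk0
          field_simp
          ring
        rw [h5, Real.cos_neg, Real.cos_pi_div_two, mul_zero]
    rw [hIa, hIb, Ioo_inter_Ioo]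
    have hlt : max e₁a e₁b < min e₂a e₂b := by
      apply max_lt <;> apply lt_min
      · rw [he₁a, he₂a]; exact hdivlt _ _ (by linarith)
      · rw [he₁a, he₂b]; exact hdivlt _ _ (by linarith)
      · rw [he₁b, he₂a]; exact hdivlt _ _ (by linarith)
      · rw [he₁b, he₂b]; exact hdivlt _ _ (by linarith)
    rw [csInf_Ioo hlt, csSup_Ioo hlt]
    rcases le_total α 0 with hαs | hαs
    · have h1 : e₁b ≤ e₁a := by rw [he₁a, he₁b]; exact hdivle _ _ (by linarith)
      have h2 : e₂b ≤ e₂a := by rw [he₂a, he₂b]; exact hdivle _ _ (by linarith)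
      rw [max_eq_left h1, min_eq_right h2, he₁a, he₂b]
      field_simp
      ring
    · have h1 : e₁a ≤ e₁b := by rw [he₁a, he₁b]; exact hdivle _ _ (by linarith)
      have h2 : e₂a ≤ e₂b := by rw [he₂a, he₂b]; exact hdivle _ _ (by linarith)
      rw [max_eq_right h1, min_eq_left h2, he₁b, he₂a]
      field_simp
      ring
end

section
/- Let s₁, …, s₁₀ ∈ ℂ and consider the 3×3 complex matrices h = !![0,0,1; 1,0,0; 0,1,0], S₁ = 1+s₁E₃₁, S₂ = 1+s₂E₃₂, S₃ = 1+s₃E₁₂, S₄ = 1+s₄E₁₃, S₅ = 1+s₅E₂₃, S₆ = 1+s₆E₂₁, S₇ = 1+s₇E₃₁, S₈ = 1+s₈E₃₂, S₉ = 1+s₉E₁₂, S₁₀ = 1+s₁₀E₁₃ (E_{ij} the elementary matrix with 1 in position (i,j)). Suppose h·S₁₀·S₉·S₈·S₇·S₆·S₅·S₄·S₃·S₂·S₁ = 1. Define t₁ = −s₆, t₂ = −s₉, t₃ = s₇, t₄ = −s₅, t₅ = −s₈, and the 2×2 complex matrices ĥ = !![0,1;−1,0], Ŝ₁ = !![1,0;t₁,1],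 Ŝ₂ = !![1,t₂;0,1], Ŝ₃ = !![1,0;t₃,1], Ŝ₄ = !![1,t₄;0,1], Ŝ₅ = !![1,0;t₅,1]. Then ĥ·Ŝ₅·Ŝ₄·Ŝ₃·Ŝ₂·Ŝ₁ = 1. (That is, the Fourier transform rule t₁=−s₆, t₂=−s₉, t₃=s₇, t₄=−s₅, t₅=−s₈ maps points of M_B(⟨z^{5/3}⟩, 1) to points of M_B(⟨w^{5/2}⟩, 1).) -/
open Matrix

lemma std02 (s : ℂ) : (1 + Matrix.single 0 2 s : Matrix (Fin 3) (Fin 3) ℂ) =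
    !![1, 0, s; 0, 1, 0; 0, 0, 1] := by
  ext i j; fin_cases i <;> fin_cases j <;> simp [Matrix.single, Matrix.one_apply, Matrix.vecHead, Matrix.vecTail]

lemma std01 (s : ℂ) : (1 + Matrix.single 0 1 s : Matrix (Fin 3) (Fin 3) ℂ) =
    !![1, s, 0; 0, 1, 0; 0, 0, 1] := by
  ext i j; fin_cases i <;> fin_cases j <;> simp [Matrix.single, Matrix.one_apply, Matrix.vecHead, Matrix.vecTail]

lemma std21 (s : ℂ) : (1 + Matrix.single 2 1 s : Matrix (Fin 3) (Fin 3) ℂ) =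
    !![1, 0, 0; 0, 1, 0; 0, s, 1] := by
  ext i j; fin_cases i <;> fin_cases j <;> simp [Matrix.single, Matrix.one_apply, Matrix.vecHead, Matrix.vecTail]

lemma std20 (s : ℂ) : (1 + Matrix.single 2 0 s : Matrix (Fin 3) (Fin 3) ℂ) =
    !![1, 0, 0; 0, 1, 0; s, 0, 1] := by
  ext i j; fin_cases i <;> fin_cases j <;> simp [Matrix.single, Matrix.one_apply, Matrix.vecHead, Matrix.vecTail]

lemma std10 (s : ℂ) : (1 + Matrix.single 1 0 s : Matrix (Fin 3) (Fin 3) ℂ) =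
    !![1, 0, 0; s, 1, 0; 0, 0, 1] := by
  ext i j; fin_cases i <;> fin_cases j <;> simp [Matrix.single, Matrix.one_apply, Matrix.vecHead, Matrix.vecTail]

lemma std12 (s : ℂ) : (1 + Matrix.single 1 2 s : Matrix (Fin 3) (Fin 3) ℂ) =
    !![1, 0, 0; 0, 1, s; 0, 0, 1] := by
  ext i j; fin_cases i <;> fin_cases j <;> simp [Matrix.single, Matrix.one_apply, Matrix.vecHead, Matrix.vecTail]

set_option maxHeartbeats 1000000 in
/-- the Fourier transform rule `t₁ = −s₆`, `t₂ = −s₉`, `t₃ = s₇`, `t₄ = −s₅`,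
`t₅ = −s₈` maps points of the Betti moduli space `M_B(⟨z^{5/3}⟩, 1)` to points of
`M_B(⟨w^{5/2}⟩, 1)`. -/
theorem fourier_five_thirds_to_five_halves
    (s₁ s₂ s₃ s₄ s₅ s₆ s₇ s₈ s₉ s₁₀ : ℂ)
    (h : (!![0, 0, 1; 1, 0, 0; 0, 1, 0] : Matrix (Fin 3) (Fin 3) ℂ) *
        (1 + Matrix.single 0 2 s₁₀) *
        (1 + Matrix.single 0 1 s₉) *
        (1 + Matrix.single 2 1 s₈) *
        (1 + Matrix.single 2 0 s₇) *
        (1 + Matrix.single 1 0 s₆) *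
        (1 + Matrix.single 1 2 s₅) *
        (1 + Matrix.single 0 2 s₄) *
        (1 + Matrix.single 0 1 s₃) *
        (1 + Matrix.single 2 1 s₂) *
        (1 + Matrix.single 2 0 s₁) = 1) :
    (!![0, 1; -1, 0] : Matrix (Fin 2) (Fin 2) ℂ) *
        !![1, 0; -s₈, 1] * !![1, -s₅; 0, 1] * !![1, 0; s₇, 1] *
        !![1, -s₉; 0, 1] * !![1, 0; -s₆, 1] = 1 := by
  rw [std02 s₁₀, std01 s₉, std21 s₈, std20 s₇, std10 s₆, std12 s₅,
      std02 s₄, std01 s₃, std21 s₂, std20 s₁, Matrix.one_fin_three] at h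
  simp [Matrix.mul_fin_three] at h
  have e00 := h.1.1
  have e02 := h.1.2.2
  have e12 := h.2.1.2.2
  have e22 := h.2.2.2.2
  have hF1 : s₅ + s₄ * s₆ = 1 := by linear_combination e22
  have hF3 : s₄ * s₇ + s₈ = -1 := by linear_combination e02 - s₈ * e22
  have hF4 : s₇ - s₄ * s₆ * s₇ - s₆ = 1 := by
    linear_combination e00 - s₁ * e02 - s₆ * e02 + s₆ * s₈ * e22
  have hH : s₉ = -s₄ := by linear_combination e12 - s₉ * e22 - s₁₀ * e02
  ext i j
  fin_cases i <;> fin_cases j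
  · simp only [Matrix.mul_apply, Fin.sum_univ_two, Matrix.one_apply]
    norm_num
    linear_combination (-(s₆*s₈) + s₆*s₇ + s₅*s₆*s₇*s₈) * hH
      + (s₇*s₈ - s₆*s₈ - s₄*s₆*s₇*s₈) * hF1
      + (-1 + s₇ - s₆ + s₄*s₆ - 2*s₄*s₆*s₇ + s₄*s₆^2 + s₄^2*s₆^2*s₇) * hF3
      + (-(s₄*s₇) + s₄*s₆ + s₄^2*s₆*s₇) * hF4
  · simp only [Matrix.mul_apply, Fin.sum_univ_two, Matrix.one_apply]
    norm_num
    linear_combination (s₈ - s₇ - s₅*s₇*s₈) * hH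
      + (s₈ + s₄*s₇*s₈) * hF1
      + (1 - s₄ + s₄*s₇ - s₄*s₆ - s₄^2*s₆*s₇) * hF3
      + (-s₄ - s₄^2*s₇) * hF4
  · simp only [Matrix.mul_apply, Fin.sum_univ_two, Matrix.one_apply]
    norm_num
    linear_combination (-s₆ + s₅*s₆*s₇) * hH
      + (s₇ - s₆ - s₄*s₆*s₇) * hF1
      + (1 - s₄*s₆) * hF4
  · simp only [Matrix.mul_apply, Fin.sum_univ_two, Matrix.one_apply]
    norm_num
    linear_combination (1 - s₅*s₇) * hH + (1 + s₄*s₇) * hF1 + s₄ * hF4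
end
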